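/- Let (T, r) be a finite rooted tree (an orientation of a tree with a distinguished vertex r) that admits an automorphism fixing r which is not the identity. Then (T, r) admits a non-injective endomorphism fixing r. -/

import Mathlib

/-- Let `(T, r)` be a finite rooted orientation of a tree (digraph `E` on `V` whose
underlying undirected graph `G` is a tree, each undirected edge being oriented in
exactly one direction). If `(T, r)` has an automorphism fixing `r` that is not the
identity, then `(T, r)` has a non-injective endomorphism fixing `r`. -/
theorem stmt11 {V : Type} [Fintype V] (E : V → V → Prop)
    (G : SimpleGraph V) (hG : ∀ a b, G.Adj a b ↔ (E a b ∨ E b a))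
    (htree : G.IsTree)
    (hanti : ∀ a b, E a b → ¬ E b a)
    (r : V) (φ : V → V)
    (hhom : ∀ a b, E a b → E (φ a) (φ b))
    (hr : φ r = r)
    (hbij : Function.Bijective φ)
    (hinv : ∀ a b, E (φ a) (φ b) → E a b)
    (hne : φ ≠ id) :
    ∃ ψ : V → V, (∀ a b, E a b → E (ψ a) (ψ b)) ∧ ψ r = r ∧ ¬ Function.Injective ψ := by
  classical
  have hconn : G.Connected := htree.isConnected
  have hacyc : G.IsAcyclic := htree.IsAcyclic
  -- φ preserves adjacency in both directions
  have hadjφ : ∀ a b, G.Adj a b → G.Adj (φ a) (φ b) := by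
    intro a b h
    rw [hG] at h ⊢
    rcases h with h | h
    · exact Or.inl (hhom _ _ h)
    · exact Or.inr (hhom _ _ h)
  have hadjφ' : ∀ a b, G.Adj (φ a) (φ b) → G.Adj a b := by
    intro a b h
    rw [hG] at h ⊢
    rcases h with h | h
    · exact Or.inl (hinv _ _ h)
    · exact Or.inr (hinv _ _ h)
  -- choose x with φ x ≠ x minimizing dist r x
  have hDne : (Finset.univ.filter (fun v => φ v ≠ v)).Nonempty := by
    by_contra h
    apply hne
    funext v
    rw [Finset.not_nonempty_iff_eq_empty, Finset.filter_eq_empty_iff] at h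
    have := h (Finset.mem_univ v)
    simpa using this
  obtain ⟨x, hxmem, hxmin⟩ :=
    Finset.exists_min_image (Finset.univ.filter (fun v => φ v ≠ v)) (fun v => G.dist r v) hDne
  have hφx : φ x ≠ x := (Finset.mem_filter.mp hxmem).2
  have hxr : x ≠ r := fun h => hφx (h ▸ hr)
  have hfix : ∀ v, G.dist r v < G.dist r x → φ v = v := by
    intro v hv
    by_contra h
    exact absurd (hxmin v (Finset.mem_filter.mpr ⟨Finset.mem_univ _, h⟩)) (not_le.mpr hv)
  -- distance is preserved by φ from r
  have hdistφ : ∀ u v, G.dist (φ u) (φ v) = G.dist u v := by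
    have hle : ∀ u v, G.dist (φ u) (φ v) ≤ G.dist u v := by
      intro u v
      obtain ⟨w, hw⟩ := hconn.exists_walk_length_eq_dist u v
      have := SimpleGraph.dist_le
        (w.map (⟨φ, fun h => hadjφ _ _ h⟩ : G →g G))
      simpa [hw] using this
    intro u v
    refine le_antisymm (hle u v) ?_
    set e := Equiv.ofBijective φ hbij with he
    have hg : ∀ a b, G.Adj a b → G.Adj (e.symm a) (e.symm b) := by
      intro a b h
      apply hadjφ'
      have h1 : φ (e.symm a) = a := e.apply_symm_apply a
      have h2 : φ (e.symm b) = b := e.apply_symm_apply b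
      rwa [h1, h2]
    obtain ⟨w, hw⟩ := hconn.exists_walk_length_eq_dist (φ u) (φ v)
    have := SimpleGraph.dist_le
      (w.map (⟨fun z => e.symm z, fun h => hg _ _ h⟩ : G →g G))
    have hu : e.symm (φ u) = u := e.symm_apply_apply u
    have hv : e.symm (φ v) = v := e.symm_apply_apply v
    simp only [SimpleGraph.Walk.length_map, hw] at this
    calc G.dist u v = G.dist (e.symm (φ u)) (e.symm (φ v)) := by rw [hu, hv]
      _ ≤ G.dist (φ u) (φ v) := this
  -- find the parent p of x
  have hdistpos : 0 < G.dist x r := hconn.pos_dist_of_ne hxr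
  obtain ⟨w, hw⟩ := hconn.exists_walk_length_eq_dist x r
  obtain ⟨p, hxp, q, rfl⟩ : ∃ p, ∃ h : G.Adj x p, ∃ q : G.Walk p r, w = SimpleGraph.Walk.cons h q := by
    cases w with
    | nil => simp at hdistpos
    | cons h q => exact ⟨_, h, q, rfl⟩
  have hq : q.length = G.dist x r - 1 := by
    simp [SimpleGraph.Walk.length_cons] at hw; omega
  have hdp : G.dist r p + 1 = G.dist r x := by
    have h1 : G.dist p r ≤ G.dist x r - 1 := hq ▸ SimpleGraph.dist_le q
    have h2 : G.dist x r ≤ 1 + G.dist p r := by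
      have := hconn.dist_triangle (u := x) (v := p) (w := r)
      have hxp1 : G.dist x p ≤ 1 := by
        simpa using SimpleGraph.dist_le (SimpleGraph.Walk.cons hxp SimpleGraph.Walk.nil)
      omega
    rw [SimpleGraph.dist_comm (u := r) (v := p), SimpleGraph.dist_comm (u := r) (v := x)]
    omega
  have hφp : φ p = p := hfix p (by omega)
  have hφxne_p : φ x ≠ p := by
    intro h
    have hxp' : x = p := hbij.1 (by rw [h, hφp])
    rw [hxp'] at hdp
    omega
  have hadj_p_φx : G.Adj p (φ x) := by
    have h := hadjφ _ _ hxp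
    rw [hφp] at h
    exact h.symm
  have hdist_rφx : G.dist r (φ x) = G.dist r x := by
    have h := hdistφ r x
    rwa [hr] at h
  set S : V → Prop := fun v => ∀ w : G.Walk r v, w.IsPath → x ∈ w.support with hS
  -- concat of a path with a new endpoint is a path
  have hconcat : ∀ {u y : V} (w : G.Walk r u) (h : G.Adj u y),
      w.IsPath → y ∉ w.support → (w.concat h).IsPath := by
    intro u y w h hw hy
    rw [← SimpleGraph.Walk.isPath_reverse_iff, SimpleGraph.Walk.reverse_concat]
    rw [SimpleGraph.Walk.cons_isPath_iff, SimpleGraph.Walk.isPath_reverse_iff,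
      SimpleGraph.Walk.support_reverse]
    exact ⟨hw, by simpa using hy⟩
  -- good paths to vertices strictly closer to r than x
  have hgeo : ∀ v, G.dist r v < G.dist r x →
      ∃ w : G.Walk r v, w.IsPath ∧ x ∉ w.support ∧ w.length ≤ G.dist r v := by
    intro v hv
    obtain ⟨w, hw⟩ := hconn.exists_walk_length_eq_dist r v
    have hxw : x ∉ w.support := by
      intro hxs
      have h1 := SimpleGraph.Walk.length_takeUntil_le w hxs
      have h2 := SimpleGraph.dist_le (w.takeUntil x hxs)
      omega
    refine ⟨w.toPath, w.toPath.2, fun h => hxw (SimpleGraph.Walk.support_toPath_subset w h), ?_⟩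
    calc (w.toPath : G.Walk r v).length ≤ w.length := SimpleGraph.Walk.length_bypass_le w
      _ = G.dist r v := hw
  have hSx : S x := fun w _ => w.end_mem_support
  have hSr : ¬ S r := by
    intro h
    have := h SimpleGraph.Walk.nil SimpleGraph.Walk.IsPath.nil
    simp at this
    exact hxr this
  have hSp : ¬ S p := by
    obtain ⟨w, hwp, hwx, _⟩ := hgeo p (by omega)
    intro h
    exact hwx (h w hwp)
  have hSφx : ¬ S (φ x) := by
    obtain ⟨w, hwp, hwx, hwl⟩ := hgeo p (by omega)
    have hφxw : φ x ∉ w.support := by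
      intro hin
      have h1 := SimpleGraph.Walk.length_takeUntil_le w hin
      have h2 := SimpleGraph.dist_le (w.takeUntil (φ x) hin)
      omega
    intro h
    have hP := hconcat w hadj_p_φx hwp hφxw
    have := h (w.concat hadj_p_φx) hP
    rw [SimpleGraph.Walk.support_concat, List.mem_append] at this
    rcases this with h' | h'
    · exact hwx h'
    · exact hφx (List.mem_singleton.mp h').symm
  -- crossing lemma: an edge from outside S into S must be the edge p—x
  have hcross : ∀ a b, G.Adj a b → ¬ S a → S b → b = x ∧ a = p := by
    intro a b hab hSa hSb
    have hSa' : ∃ w : G.Walk r a, w.IsPath ∧ x ∉ w.support := by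
      by_contra h'
      push_neg at h'
      exact hSa fun w hw => h' w hw
    obtain ⟨P, hPp, hPx⟩ := hSa'
    have hbP : b ∉ P.support := by
      intro hin
      have h1 := hSb (P.takeUntil b hin) (hPp.takeUntil hin)
      exact hPx (SimpleGraph.Walk.support_takeUntil_subset P hin h1)
    have hP' := hconcat P hab hPp hbP
    have hxmem' := hSb (P.concat hab) hP'
    rw [SimpleGraph.Walk.support_concat, List.mem_append] at hxmem'
    have hbx : b = x := by
      rcases hxmem' with h' | h'
      · exact absurd h' hPx
      · exact (List.mem_singleton.mp h').symm
    refine ⟨hbx, ?_⟩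
    obtain ⟨Q, hQp, hQx, _⟩ := hgeo p (by omega)
    have hxP : G.Adj p x := hxp.symm
    have hab' : G.Adj a x := hbx ▸ hab
    have hxbP : x ∉ P.support := hbx ▸ hbP
    have hW1 := hconcat P hab' hPp hxbP
    have hW2 := hconcat Q hxP hQp hQx
    have hequal : P.concat hab' = Q.concat hxP := by
      have := hacyc.path_unique ⟨P.concat hab', hW1⟩ ⟨Q.concat hxP, hW2⟩
      exact congrArg Subtype.val this
    have hrev : (P.concat hab').reverse = (Q.concat hxP).reverse := by rw [hequal]
    simp only [SimpleGraph.Walk.reverse_concat] at hrev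
    have hgv := congrArg (fun w => w.getVert 1) hrev
    simpa [SimpleGraph.Walk.getVert_cons_succ] using hgv
  -- the folding endomorphism
  refine ⟨fun v => if S v then φ v else v, ?_, ?_, ?_⟩
  · intro a b hab
    have hadjab : G.Adj a b := (hG a b).mpr (Or.inl hab)
    show E (if S a then φ a else a) (if S b then φ b else b)
    by_cases hSa : S a <;> by_cases hSb : S b
    · rw [if_pos hSa, if_pos hSb]
      exact hhom a b hab
    · obtain ⟨hax, hbp⟩ := hcross b a hadjab.symm hSb hSa
      rw [if_pos hSa, if_neg hSb, hax, hbp]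
      have h' : E x p := hax ▸ hbp ▸ hab
      have := hhom x p h'
      rwa [hφp] at this
    · obtain ⟨hbx, hap⟩ := hcross a b hadjab hSa hSb
      rw [if_neg hSa, if_pos hSb, hap, hbx]
      have h' : E p x := hap ▸ hbx ▸ hab
      have := hhom p x h'
      rwa [hφp] at this
    · rw [if_neg hSa, if_neg hSb]
      exact hab
  · show (if S r then φ r else r) = r
    rw [if_neg hSr]
  · intro hinj
    have h1 : (if S x then φ x else x) = φ x := if_pos hSx
    have h2 : (if S (φ x) then φ (φ x) else φ x) = φ x := if_neg hSφx
    have := hinj (a₁ := x) (a₂ := φ x)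
      (by show (if S x then φ x else x) = (if S (φ x) then φ (φ x) else φ x); rw [h1, h2])
    exact hφx this.symm
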